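/- Let C₁, …, C_n be finite subsets of {1, …, n} with maxₖ |Cₖ| ≤ A, and suppose for every edge (i,j) ∈ Ẽ of a graph G̃ we have |{k : i ∈ Cₖ and j ∈ Cₖ}| ≥ B. Then ∑_{k=1}^n P^⊥_{u_{Cₖ}} ⪰ (B/A) 𝓛̃, where P^⊥_{u_{Cₖ}} is the n×n matrix (padded with zeros outside Cₖ×Cₖ) of the projection orthogonal to the all-ones vector on coordinates Cₖ, and 𝓛̃ is the Laplacian of G̃. -/

import Mathlib

open Matrix

private lemma quad_proj' {n : ℕ} (s : Finset (Fin n)) (x : Fin n → ℝ) :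
    x ⬝ᵥ ((Matrix.of fun i j => if i ∈ s ∧ j ∈ s then (if i = j then (1:ℝ) else 0) - 1/(s.card:ℝ) else 0) *ᵥ x)
    = (∑ i ∈ s, x i ^ 2) - (∑ i ∈ s, x i)^2 / s.card := by
  simp only [mulVec, dotProduct, of_apply]
  have key : ∀ i, ∑ j, (if i ∈ s ∧ j ∈ s then (if i = j then (1:ℝ) else 0) - 1/(s.card:ℝ) else 0) * x j
      = if i ∈ s then x i - (∑ j ∈ s, x j)/s.card else 0 := by
    intro i
    by_cases hi : i ∈ s
    · simp only [hi, true_and, if_true]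
      have : ∀ j, (if j ∈ s then (if i = j then (1:ℝ) else 0) - 1/(s.card:ℝ) else 0) * x j
          = (if j ∈ s then (if i = j then x j else 0) - x j/(s.card:ℝ) else 0) := by
        intro j; by_cases hj : j ∈ s <;> by_cases hij : i = j <;> simp [hj, hij] <;> ring
      simp only [this, Finset.sum_ite_mem, Finset.univ_inter, Finset.sum_sub_distrib,
        Finset.sum_ite_eq, hi, if_true, Finset.sum_div]
    · simp [hi]
  simp only [key, mul_ite, mul_zero, Finset.sum_ite_mem, Finset.univ_inter]
  rw [Finset.sum_congr rfl (fun i _ => mul_sub (x i) (x i) _), Finset.sum_sub_distrib]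
  rw [div_eq_mul_inv, ← Finset.sum_mul]
  simp only [← sq]
  ring

private lemma quad_edge' {n : ℕ} (p : Fin n × Fin n) (x : Fin n → ℝ) :
    x ⬝ᵥ ((Matrix.vecMulVec (Pi.single p.1 1 - Pi.single p.2 1)
        (Pi.single p.1 1 - Pi.single p.2 1)) *ᵥ x) = (x p.1 - x p.2)^2 := by
  set w : Fin n → ℝ := Pi.single p.1 1 - Pi.single p.2 1 with hw
  have hmv : (Matrix.vecMulVec w w) *ᵥ x = fun i => w i * (w ⬝ᵥ x) := by
    ext i
    simp [mulVec, Matrix.vecMulVec_apply, dotProduct, Finset.mul_sum, mul_assoc]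
  rw [hmv]
  have : x ⬝ᵥ (fun i => w i * (w ⬝ᵥ x)) = (x ⬝ᵥ w) * (w ⬝ᵥ x) := by
    simp [dotProduct, Finset.sum_mul, mul_assoc]
  rw [this]
  have h1 : w ⬝ᵥ x = x p.1 - x p.2 := by
    simp [hw, sub_dotProduct, single_dotProduct]
  have h2 : x ⬝ᵥ w = x p.1 - x p.2 := by
    simp [hw, dotProduct_sub, dotProduct_single]
  rw [h1, h2, sq]

private lemma expand_sq' {n : ℕ} (s : Finset (Fin n)) (x : Fin n → ℝ) :
    ∑ i ∈ s, ∑ j ∈ s, (x i - x j)^2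
    = 2 * s.card * (∑ i ∈ s, x i ^ 2) - 2 * (∑ i ∈ s, x i)^2 := by
  have : ∀ i ∈ s, ∑ j ∈ s, (x i - x j)^2
      = s.card * x i ^ 2 - 2 * x i * (∑ j ∈ s, x j) + ∑ j ∈ s, x j ^ 2 := by
    intro i _
    rw [Finset.sum_congr rfl (fun j _ => by ring :
      ∀ j ∈ s, (x i - x j)^2 = x i ^2 - 2 * x i * x j + x j ^ 2)]
    simp [Finset.sum_add_distrib, Finset.sum_sub_distrib, ← Finset.mul_sum, Finset.sum_const,
      nsmul_eq_mul]
  rw [Finset.sum_congr rfl this]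
  simp only [Finset.sum_add_distrib, Finset.sum_sub_distrib, ← Finset.mul_sum, Finset.sum_const,
    nsmul_eq_mul, ← Finset.sum_mul]
  ring

private lemma dotProduct_sum' {n : ℕ} {ι : Type*} (s : Finset ι) (x : Fin n → ℝ)
    (f : ι → (Fin n → ℝ)) : x ⬝ᵥ (∑ k ∈ s, f k) = ∑ k ∈ s, x ⬝ᵥ f k := by
  simp only [dotProduct, Finset.sum_apply, Finset.mul_sum]
  exact Finset.sum_comm

private lemma sum_mulVec' {n : ℕ} {ι : Type*} (s : Finset ι) (M : ι → Matrix (Fin n) (Fin n) ℝ)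
    (x : Fin n → ℝ) : (∑ k ∈ s, M k) *ᵥ x = ∑ k ∈ s, (M k *ᵥ x) := by
  ext i
  simp only [mulVec, dotProduct, Finset.sum_apply, Matrix.sum_apply, Finset.sum_mul]
  exact Finset.sum_comm

private lemma per_clique' {n : ℕ} (s : Finset (Fin n)) (Et : Finset (Fin n × Fin n))
    (horient : ∀ p ∈ Et, (p.2, p.1) ∉ Et) (x : Fin n → ℝ) :
    2 * ∑ p ∈ Et.filter (fun p => p.1 ∈ s ∧ p.2 ∈ s), (x p.1 - x p.2)^2
    ≤ ∑ i ∈ s, ∑ j ∈ s, (x i - x j)^2 := by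
  classical
  set F := Et.filter (fun p => p.1 ∈ s ∧ p.2 ∈ s) with hF
  set emb : Fin n × Fin n ↪ Fin n × Fin n := ⟨Prod.swap, Prod.swap_injective⟩ with hemb
  have hdisj : Disjoint F (F.map emb) := by
    rw [Finset.disjoint_left]
    intro q hq hq'
    obtain ⟨r, hr, hrq⟩ := Finset.mem_map.mp hq'
    have hqEt : q ∈ Et := (Finset.mem_filter.mp hq).1
    have hrEt : r ∈ Et := (Finset.mem_filter.mp hr).1
    exact horient r hrEt (by rw [show (r.2, r.1) = q from hrq.symm ▸ rfl]; exact hqEt)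
  have hsub : F ∪ F.map emb ⊆ s ×ˢ s := by
    intro q hq
    rcases Finset.mem_union.mp hq with h | h
    · obtain ⟨-, h1, h2⟩ := Finset.mem_filter.mp h
      exact Finset.mem_product.mpr ⟨h1, h2⟩
    · obtain ⟨r, hr, hrq⟩ := Finset.mem_map.mp h
      obtain ⟨-, h1, h2⟩ := Finset.mem_filter.mp hr
      subst hrq
      exact Finset.mem_product.mpr ⟨h2, h1⟩
  have hswap : ∑ q ∈ F.map emb, (x q.1 - x q.2)^2 = ∑ q ∈ F, (x q.1 - x q.2)^2 := by
    rw [Finset.sum_map]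
    exact Finset.sum_congr rfl fun q _ => by
      simp only [hemb, Function.Embedding.coeFn_mk, Prod.swap]
      rw [← neg_sub (x q.1) (x q.2), neg_sq]
  calc 2 * ∑ p ∈ F, (x p.1 - x p.2)^2
      = ∑ q ∈ F ∪ F.map emb, (x q.1 - x q.2)^2 := by
        rw [Finset.sum_union hdisj, hswap]; ring
    _ ≤ ∑ q ∈ s ×ˢ s, (x q.1 - x q.2)^2 :=
        Finset.sum_le_sum_of_subset_of_nonneg hsub (fun q _ _ => sq_nonneg _)
    _ = ∑ i ∈ s, ∑ j ∈ s, (x i - x j)^2 := Finset.sum_product _ _ _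

/-- Claim C (Laplacian comparison): if |Cₖ| ≤ A for all k and every edge (i,j) of G̃
has at least B cliques Cₖ containing both endpoints, then
∑ₖ P^⊥_{u_{Cₖ}} ⪰ (B/A) 𝓛̃. -/
theorem sum_clique_projections_dominates_laplacian {n : ℕ}
    (C : Fin n → Finset (Fin n)) (A B : ℝ) (hA : 0 < A)
    (hcard : ∀ k, ((C k).card : ℝ) ≤ A)
    (Et : Finset (Fin n × Fin n))
    (hloop : ∀ p ∈ Et, p.1 ≠ p.2)
    (horient : ∀ p ∈ Et, (p.2, p.1) ∉ Et)
    (hB : ∀ p ∈ Et,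
      B ≤ ((Finset.univ.filter fun k => p.1 ∈ C k ∧ p.2 ∈ C k).card : ℝ)) :
    Matrix.PosSemidef
      ((∑ k, Matrix.of fun i j =>
          if i ∈ C k ∧ j ∈ C k then
            (if i = j then (1 : ℝ) else 0) - 1 / (C k).card
          else 0)
        - (B / A) • ∑ p ∈ Et, Matrix.vecMulVec
            (Pi.single p.1 1 - Pi.single p.2 1)
            (Pi.single p.1 1 - Pi.single p.2 1)) := by
  classical
  rw [Matrix.posSemidef_iff_dotProduct_mulVec]
  constructor
  · -- Hermitian
    apply Matrix.IsHermitian.sub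
    · show Matrix.conjTranspose _ = _
      rw [Matrix.conjTranspose_sum]
      refine Finset.sum_congr rfl fun k _ => ?_
      ext i j
      simp only [Matrix.conjTranspose_apply, Matrix.of_apply, star_trivial]
      by_cases hi : i ∈ C k <;> by_cases hj : j ∈ C k <;> simp [hi, hj, eq_comm]
    · show Matrix.conjTranspose _ = _
      rw [Matrix.conjTranspose_smul, Matrix.conjTranspose_sum]
      congr 1
      refine Finset.sum_congr rfl fun p _ => ?_
      ext i j
      simp [Matrix.transpose_apply, Matrix.vecMulVec_apply, mul_comm]
  · intro x
    rw [star_trivial, Matrix.sub_mulVec, dotProduct_sub, sum_mulVec', dotProduct_sum',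
      Matrix.smul_mulVec, dotProduct_smul]
    rw [Finset.sum_congr rfl (fun k _ => quad_proj' (C k) x)]
    rw [show ((∑ p ∈ Et, Matrix.vecMulVec (Pi.single p.1 1 - Pi.single p.2 1)
        (Pi.single p.1 1 - Pi.single p.2 1)) *ᵥ x) = ∑ p ∈ Et,
        ((Matrix.vecMulVec (Pi.single p.1 1 - Pi.single p.2 1)
        (Pi.single p.1 1 - Pi.single p.2 1)) *ᵥ x) from sum_mulVec' _ _ _,
      dotProduct_sum', Finset.sum_congr rfl (fun p _ => quad_edge' p x)]
    rw [sub_nonneg, smul_eq_mul]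
    calc B / A * ∑ p ∈ Et, (x p.1 - x p.2)^2
        ≤ ∑ p ∈ Et, (∑ k ∈ Finset.univ.filter (fun k => p.1 ∈ C k ∧ p.2 ∈ C k),
            1/((C k).card:ℝ)) * (x p.1 - x p.2)^2 := by
          rw [Finset.mul_sum]
          refine Finset.sum_le_sum fun p hp => ?_
          refine mul_le_mul_of_nonneg_right ?_ (sq_nonneg _)
          set K := Finset.univ.filter (fun k => p.1 ∈ C k ∧ p.2 ∈ C k) with hK
          have h1 : B / A ≤ (K.card : ℝ) / A := by gcongr; exact hB p hp
          have h2 : ((K.card : ℝ)) / A = ∑ _k ∈ K, 1/A := by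
            rw [Finset.sum_const, nsmul_eq_mul]; ring
          have h3 : ∑ _k ∈ K, (1/A : ℝ) ≤ ∑ k ∈ K, 1/((C k).card:ℝ) := by
            refine Finset.sum_le_sum fun k hk => ?_
            have hk1 : p.1 ∈ C k := ((Finset.mem_filter.mp hk).2).1
            have hpos : (0:ℝ) < ((C k).card : ℝ) := by
              exact_mod_cast Finset.card_pos.mpr ⟨p.1, hk1⟩
            exact one_div_le_one_div_of_le hpos (hcard k)
          linarith
      _ = ∑ p ∈ Et, ∑ k ∈ Finset.univ.filter (fun k => p.1 ∈ C k ∧ p.2 ∈ C k),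
            1/((C k).card:ℝ) * (x p.1 - x p.2)^2 :=
          Finset.sum_congr rfl fun p _ => Finset.sum_mul _ _ _
      _ = ∑ k, ∑ p ∈ Et.filter (fun p => p.1 ∈ C k ∧ p.2 ∈ C k),
            1/((C k).card:ℝ) * (x p.1 - x p.2)^2 := by
          simp only [Finset.sum_filter]
          exact Finset.sum_comm
      _ ≤ ∑ k, ((∑ i ∈ C k, x i ^ 2) - (∑ i ∈ C k, x i)^2 / (C k).card) := by
          refine Finset.sum_le_sum fun k _ => ?_
          by_cases hc : (C k).card = 0
          · have he : C k = ∅ := Finset.card_eq_zero.mp hc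
            simp [he]
          · have hpos : (0:ℝ) < (C k).card := by
              exact_mod_cast Nat.pos_of_ne_zero hc
            have h4 := per_clique' (C k) Et horient x
            rw [expand_sq'] at h4
            rw [← Finset.mul_sum]
            set S := ∑ i ∈ C k, x i ^ 2
            set T := ∑ i ∈ C k, x i
            set D := ∑ p ∈ Et.filter (fun p => p.1 ∈ C k ∧ p.2 ∈ C k), (x p.1 - x p.2)^2
            have hD : D ≤ ((C k).card:ℝ) * S - T^2 := by linarith
            have h5 : (1/((C k).card:ℝ)) * D ≤ (1/((C k).card:ℝ)) * (((C k).card:ℝ) * S - T^2) :=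
              mul_le_mul_of_nonneg_left hD (by positivity)
            have heq : (1/((C k).card:ℝ)) * (((C k).card:ℝ) * S - T^2) = S - T^2/((C k).card:ℝ) := by
              field_simp
            linarith
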